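/- For n ≥ 2 and any doubly pure element a of the Cayley–Dickson algebra A_n: (1) a·ẽ₀ = ã and ẽ₀·a = −ã; (2) a·ã = −‖a‖²·ẽ₀ and ã·a = ‖a‖²·ẽ₀, and consequently ⟨a, ã⟩ = 0. -/

import Mathlib

noncomputable section

/-- The Cayley–Dickson algebra `A n` of dimension `2^n` over `ℝ`:
`A 0 = ℝ` and `A (n+1) = A n × A n`. -/
def CD : ℕ → Type
  | 0 => ℝ
  | n + 1 => CD n × CD n

namespace CD

instance instAddCommGroup : (n : ℕ) → AddCommGroup (CD n)
  | 0 => inferInstanceAs (AddCommGroup ℝ)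
  | n + 1 =>
    letI := instAddCommGroup n
    inferInstanceAs (AddCommGroup (CD n × CD n))

instance instModule : (n : ℕ) → Module ℝ (CD n)
  | 0 => inferInstanceAs (Module ℝ ℝ)
  | n + 1 =>
    letI := instAddCommGroup n
    letI := instModule n
    inferInstanceAs (Module ℝ (CD n × CD n))

/-- Conjugation: `x̄ = x` on `ℝ` and `(x₁,x₂)‾ = (x̄₁, -x₂)`. -/
protected def conj : {n : ℕ} → CD n → CD n
  | 0, x => x
  | _ + 1, x => (CD.conj x.1, -x.2)

/-- Cayley–Dickson multiplication: `(a,b)(x,y) = (ax - ȳb, ya + bx̄)`. -/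
protected def mul : {n : ℕ} → CD n → CD n → CD n
  | 0, x, y => (show ℝ from x) * (show ℝ from y)
  | _ + 1, x, y =>
    (CD.mul x.1 y.1 - CD.mul (CD.conj y.2) x.2,
     CD.mul y.2 x.1 + CD.mul x.2 (CD.conj y.1))

instance instMul (n : ℕ) : Mul (CD n) := ⟨CD.mul⟩

/-- The multiplicative unit `e₀` of `A n`. -/
def e0 : (n : ℕ) → CD n
  | 0 => (1 : ℝ)
  | n + 1 => (e0 n, 0)

/-- The element `ẽ₀ = (0, e₀)` of `A n` (junk value `0` for `n = 0`). -/
def te0 : (n : ℕ) → CD n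
  | 0 => 0
  | n + 1 => (0, e0 n)

/-- The "complexification" `α̃ = (-b, a)` of `α = (a,b)` (junk value `0` for `n = 0`);
note `α̃ = α·ẽ₀`. -/
def tilde : {n : ℕ} → CD n → CD n
  | 0, _ => 0
  | _ + 1, x => (-x.2, x.1)

/-- The standard inner product on `A n ≅ ℝ^{2^n}`. -/
protected def inner : {n : ℕ} → CD n → CD n → ℝ
  | 0, x, y => (show ℝ from x) * (show ℝ from y)
  | _ + 1, x, y => CD.inner x.1 y.1 + CD.inner x.2 y.2

/-- The euclidean norm on `A n`. -/
protected def norm {n : ℕ} (x : CD n) : ℝ := Real.sqrt (CD.inner x x)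

/-- `x` is pure if its trace `t(x) = x + x̄` vanishes. -/
def IsPure {n : ℕ} (x : CD n) : Prop := x + CD.conj x = 0

/-- `x = (a,b)` is doubly pure if both `a` and `b` are pure
(equivalently, both `x` and `x̃` are pure). -/
def IsDoublyPure : {n : ℕ} → CD n → Prop
  | 0, x => x = 0
  | _ + 1, x => IsPure x.1 ∧ IsPure x.2

/-- The associator `(x,y,z) = (xy)z - x(yz)`. -/
def assoc {n : ℕ} (x y z : CD n) : CD n := (x * y) * z - x * (y * z)

/-- The subspace `ℍ_a`: the real span of `{e₀, ã, a, ẽ₀}`. -/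
def Ha {n : ℕ} (a : CD n) : Submodule ℝ (CD n) :=
  Submodule.span ℝ {e0 n, tilde a, a, te0 n}

/-- The orthogonal complement `ℍ_a^⊥` of `ℍ_a` in `A n`. -/
def HaPerp {n : ℕ} (a : CD n) : Set (CD n) :=
  {x | ∀ y ∈ Ha a, CD.inner x y = 0}

/-- The element `ε = (ẽ₀, 0)` of `A (n+1)`. -/
def eps (n : ℕ) : CD (n + 1) := (te0 n, 0)

/-- `α̂ = (b,a)` for `α = (a,b) ∈ A (n+1)`. -/
def hat {n : ℕ} (x : CD (n + 1)) : CD (n + 1) := (x.2, x.1)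

/-- The element `(a, b)` of `A (n+1) = A n × A n`. -/
def pair {n : ℕ} (a b : CD n) : CD (n + 1) := (a, b)

end CD



namespace CD

lemma mul_def {n : ℕ} (x y : CD (n+1)) :
    x * y = (x.1 * y.1 - CD.conj y.2 * x.2, y.2 * x.1 + x.2 * CD.conj y.1) := rfl

lemma pair_eq {n : ℕ} (a b c d : CD n) :
    ((a, b) : CD (n+1)) = ((c, d) : CD (n+1)) ↔ a = c ∧ b = d := Prod.mk.injEq a b c d ▸ Iff.rfl

lemma conj_zero : ∀ {n : ℕ}, CD.conj (0 : CD n) = 0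
  | 0 => rfl
  | n + 1 => by
    show ((CD.conj (0 : CD n), -(0 : CD n)) : CD n × CD n) = (0, 0)
    rw [conj_zero, neg_zero]

lemma conj_e0 : ∀ {n : ℕ}, CD.conj (e0 n) = e0 n
  | 0 => rfl
  | n + 1 => by
    show ((CD.conj (e0 n), -(0 : CD n)) : CD n × CD n) = (e0 n, 0)
    rw [conj_e0, neg_zero]

lemma conj_neg : ∀ {n : ℕ} (x : CD n), CD.conj (-x) = -CD.conj x
  | 0, x => rfl
  | n + 1, x => by
    show ((CD.conj (-x.1), -(-x.2)) : CD n × CD n) = (-(CD.conj x.1), -(-x.2))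
    rw [conj_neg]

lemma conj_conj : ∀ {n : ℕ} (x : CD n), CD.conj (CD.conj x) = x
  | 0, x => rfl
  | n + 1, x => by
    show ((CD.conj (CD.conj x.1), -(-x.2)) : CD n × CD n) = (x.1, x.2)
    rw [conj_conj, neg_neg]

lemma zero_mul_mul_zero : ∀ {n : ℕ} (x : CD n), (0 : CD n) * x = 0 ∧ x * (0 : CD n) = 0
  | 0, x => by
    constructor
    · show (0 : ℝ) * (show ℝ from x) = (0 : ℝ)
      exact zero_mul _
    · show (show ℝ from x) * (0 : ℝ) = (0 : ℝ)
      exact mul_zero _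
  | n + 1, x => by
    constructor
    · rw [mul_def]
      show ((0 : CD n) * x.1 - CD.conj x.2 * 0, x.2 * 0 + (0:CD n) * CD.conj x.1)
          = (((0:CD n), (0:CD n)) : CD n × CD n)
      rw [(zero_mul_mul_zero x.1).1, (zero_mul_mul_zero (CD.conj x.1)).1,
        (zero_mul_mul_zero (CD.conj x.2)).2, (zero_mul_mul_zero x.2).2, sub_zero, add_zero]
    · rw [mul_def]
      show (x.1 * 0 - CD.conj (0:CD n) * x.2, (0:CD n) * x.1 + x.2 * CD.conj 0)
          = (((0:CD n), (0:CD n)) : CD n × CD n)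
      rw [conj_zero, (zero_mul_mul_zero x.1).2, (zero_mul_mul_zero x.2).1,
        (zero_mul_mul_zero x.1).1, (zero_mul_mul_zero x.2).2, sub_zero, add_zero]

lemma zero_mul' {n : ℕ} (x : CD n) : (0 : CD n) * x = 0 := (zero_mul_mul_zero x).1
lemma mul_zero' {n : ℕ} (x : CD n) : x * (0 : CD n) = 0 := (zero_mul_mul_zero x).2

lemma neg_mul' : ∀ {n : ℕ} (x y : CD n), (-x) * y = -(x * y) ∧ x * (-y) = -(x * y)
  | 0, x, y => by
    constructor
    · show (-(show ℝ from x)) * (show ℝ from y) = -((show ℝ from x) * (show ℝ from y))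
      exact neg_mul _ _
    · show (show ℝ from x) * (-(show ℝ from y)) = -((show ℝ from x) * (show ℝ from y))
      exact mul_neg _ _
  | n + 1, x, y => by
    constructor
    · rw [mul_def, mul_def]
      show ((-x.1) * y.1 - CD.conj y.2 * (-x.2), y.2 * (-x.1) + (-x.2) * CD.conj y.1)
          = (-(x.1 * y.1 - CD.conj y.2 * x.2), -(y.2 * x.1 + x.2 * CD.conj y.1))
      rw [pair_eq]
      constructor
      · rw [(neg_mul' x.1 y.1).1, (neg_mul' (CD.conj y.2) x.2).2]; abel
      · rw [(neg_mul' y.2 x.1).2, (neg_mul' x.2 (CD.conj y.1)).1]; abel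
    · rw [mul_def, mul_def]
      show (x.1 * (-y.1) - CD.conj (-y.2) * x.2, (-y.2) * x.1 + x.2 * CD.conj (-y.1))
          = (-(x.1 * y.1 - CD.conj y.2 * x.2), -(y.2 * x.1 + x.2 * CD.conj y.1))
      rw [conj_neg, conj_neg, pair_eq]
      constructor
      · rw [(neg_mul' x.1 y.1).2, (neg_mul' (CD.conj y.2) x.2).1]; abel
      · rw [(neg_mul' y.2 x.1).1, (neg_mul' x.2 (CD.conj y.1)).2]; abel

lemma neg_mul'' {n : ℕ} (x y : CD n) : (-x) * y = -(x * y) := (neg_mul' x y).1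
lemma mul_neg'' {n : ℕ} (x y : CD n) : x * (-y) = -(x * y) := (neg_mul' x y).2

lemma e0_mul_mul_e0 : ∀ {n : ℕ} (x : CD n), e0 n * x = x ∧ x * e0 n = x
  | 0, x => by
    constructor
    · show (1 : ℝ) * (show ℝ from x) = x
      exact one_mul _
    · show (show ℝ from x) * (1 : ℝ) = x
      exact mul_one _
  | n + 1, x => by
    constructor
    · rw [mul_def]
      show (e0 n * x.1 - CD.conj x.2 * 0, x.2 * e0 n + (0:CD n) * CD.conj x.1) = (x.1, x.2)
      rw [(e0_mul_mul_e0 x.1).1, mul_zero' (CD.conj x.2), sub_zero, zero_mul' (CD.conj x.1),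
        add_zero, (e0_mul_mul_e0 x.2).2]
    · rw [mul_def]
      show (x.1 * e0 n - CD.conj (0:CD n) * x.2, (0:CD n) * x.1 + x.2 * CD.conj (e0 n))
          = (x.1, x.2)
      rw [conj_zero, conj_e0, (e0_mul_mul_e0 x.1).2, zero_mul' x.2, sub_zero, zero_mul' x.1,
        zero_add, (e0_mul_mul_e0 x.2).2]

lemma e0_mul {n : ℕ} (x : CD n) : e0 n * x = x := (e0_mul_mul_e0 x).1
lemma mul_e0 {n : ℕ} (x : CD n) : x * e0 n = x := (e0_mul_mul_e0 x).2

lemma inner_symm : ∀ {n : ℕ} (x y : CD n), CD.inner x y = CD.inner y x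
  | 0, x, y => mul_comm (show ℝ from x) (show ℝ from y)
  | n + 1, x, y => by
    show CD.inner x.1 y.1 + CD.inner x.2 y.2 = CD.inner y.1 x.1 + CD.inner y.2 x.2
    rw [inner_symm x.1, inner_symm x.2]

lemma inner_neg_right : ∀ {n : ℕ} (x y : CD n), CD.inner x (-y) = -CD.inner x y
  | 0, x, y => mul_neg (show ℝ from x) (show ℝ from y)
  | n + 1, x, y => by
    show CD.inner x.1 (-y.1) + CD.inner x.2 (-y.2) = -(CD.inner x.1 y.1 + CD.inner x.2 y.2)
    rw [inner_neg_right, inner_neg_right, neg_add]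

lemma inner_self_nonneg : ∀ {n : ℕ} (x : CD n), 0 ≤ CD.inner x x
  | 0, x => mul_self_nonneg (show ℝ from x)
  | n + 1, x => add_nonneg (inner_self_nonneg x.1) (inner_self_nonneg x.2)

lemma mul_conj_self : ∀ {n : ℕ} (x : CD n),
    x * CD.conj x = CD.inner x x • e0 n ∧ CD.conj x * x = CD.inner x x • e0 n
  | 0, x => by
    constructor <;>
    · show (show ℝ from x) * (show ℝ from x) = ((show ℝ from x) * (show ℝ from x)) • (1 : ℝ)
      rw [smul_eq_mul, mul_one]
  | n + 1, x => by
    have h1 := mul_conj_self x.1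
    have h2 := mul_conj_self x.2
    have hs : CD.inner x x • e0 (n+1)
        = ((((CD.inner x.1 x.1 + CD.inner x.2 x.2) • e0 n : CD n), ((0:CD n))) : CD n × CD n) := by
      show ((CD.inner x.1 x.1 + CD.inner x.2 x.2) • e0 n,
        (CD.inner x.1 x.1 + CD.inner x.2 x.2) • (0:CD n)) = _
      rw [smul_zero]
    constructor
    · rw [mul_def]
      show (x.1 * CD.conj x.1 - CD.conj (-x.2) * x.2, (-x.2) * x.1 + x.2 * CD.conj (CD.conj x.1))
          = CD.inner x x • e0 (n+1)
      rw [hs, conj_neg, conj_conj, pair_eq]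
      constructor
      · rw [neg_mul'' (CD.conj x.2) x.2, sub_neg_eq_add, h1.1, h2.2, add_smul]
      · rw [neg_mul'' x.2 x.1, neg_add_cancel]
    · rw [mul_def]
      show (CD.conj x.1 * x.1 - CD.conj x.2 * (-x.2), x.2 * CD.conj x.1 + (-x.2) * CD.conj x.1)
          = CD.inner x x • e0 (n+1)
      rw [hs, pair_eq]
      constructor
      · rw [mul_neg'' (CD.conj x.2) x.2, sub_neg_eq_add, h1.2, h2.2, add_smul]
      · rw [neg_mul'' x.2 (CD.conj x.1), add_neg_cancel]

end CD

/-- For `n ≥ 2` and any doubly pure `a ∈ A n`: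
(1) `a·ẽ₀ = ã` and `ẽ₀·a = -ã`;
(2) `a·ã = -‖a‖²·ẽ₀` and `ã·a = ‖a‖²·ẽ₀`, and consequently `⟨a, ã⟩ = 0`. -/
theorem statement0 (n : ℕ) (hn : 2 ≤ n) (a : CD n) (ha : CD.IsDoublyPure a) :
    a * CD.te0 n = CD.tilde a ∧
    CD.te0 n * a = -CD.tilde a ∧
    a * CD.tilde a = -(CD.norm a ^ 2 • CD.te0 n) ∧
    CD.tilde a * a = CD.norm a ^ 2 • CD.te0 n ∧
    CD.inner a (CD.tilde a) = 0 := by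
  obtain ⟨m, rfl⟩ : ∃ m, n = m + 1 := ⟨n - 1, by omega⟩
  obtain ⟨h1, h2⟩ := ha
  have hc1 : CD.conj a.1 = -a.1 := eq_neg_of_add_eq_zero_right h1
  have hc2 : CD.conj a.2 = -a.2 := eq_neg_of_add_eq_zero_right h2
  have hte : CD.te0 (m+1) = (((0 : CD m), CD.e0 m) : CD m × CD m) := rfl
  have hti : CD.tilde a = ((-a.2, a.1) : CD m × CD m) := rfl
  have hnorm : CD.norm a ^ 2 = CD.inner a a := Real.sq_sqrt (CD.inner_self_nonneg a)
  have hinner : CD.inner a a = CD.inner a.1 a.1 + CD.inner a.2 a.2 := rfl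
  have hsq1 : a.1 * a.1 = -(CD.inner a.1 a.1 • CD.e0 m) := by
    have := (CD.mul_conj_self a.1).1
    rw [hc1, CD.mul_neg'' a.1 a.1] at this
    rw [← this, neg_neg]
  have hsq2 : a.2 * a.2 = -(CD.inner a.2 a.2 • CD.e0 m) := by
    have := (CD.mul_conj_self a.2).1
    rw [hc2, CD.mul_neg'' a.2 a.2] at this
    rw [← this, neg_neg]
  refine ⟨?_, ?_, ?_, ?_, ?_⟩
  · rw [CD.mul_def, hti, hte]
    show (a.1 * 0 - CD.conj (CD.e0 m) * a.2, CD.e0 m * a.1 + a.2 * CD.conj (0 : CD m))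
        = ((-a.2, a.1) : CD m × CD m)
    rw [CD.conj_e0, CD.conj_zero, CD.mul_zero' a.1, CD.mul_zero' a.2, CD.e0_mul a.2,
      CD.e0_mul a.1, zero_sub, add_zero]
  · rw [CD.mul_def, hti, hte]
    have hneg : -(((-a.2, a.1) : CD m × CD m) : CD (m+1)) = ((a.2, -a.1) : CD m × CD m) := by
      show ((-(-a.2), -a.1) : CD m × CD m) = _
      rw [neg_neg]
    refine Eq.trans ?_ hneg.symm
    show ((0:CD m) * a.1 - CD.conj a.2 * CD.e0 m, a.2 * 0 + CD.e0 m * CD.conj a.1)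
        = ((a.2, -a.1) : CD m × CD m)
    rw [hc1, hc2, CD.zero_mul' a.1, CD.mul_zero' a.2, CD.neg_mul'' a.2 (CD.e0 m),
      CD.mul_e0 a.2, CD.e0_mul (-a.1), zero_sub, neg_neg, zero_add]
  · rw [CD.mul_def, hti, hte, hnorm, hinner]
    have hrhs : -((CD.inner a.1 a.1 + CD.inner a.2 a.2) • (((0:CD m), CD.e0 m) : CD m × CD m))
        = (((0 : CD m), -((CD.inner a.1 a.1 + CD.inner a.2 a.2) • CD.e0 m)) : CD m × CD m) := by
      show (-((CD.inner a.1 a.1 + CD.inner a.2 a.2) • (0:CD m)),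
        -((CD.inner a.1 a.1 + CD.inner a.2 a.2) • CD.e0 m)) = _
      rw [smul_zero, neg_zero]
    refine Eq.trans ?_ hrhs.symm
    show (a.1 * (-a.2) - CD.conj a.1 * a.2, a.1 * a.1 + a.2 * CD.conj (-a.2))
        = (((0 : CD m), -((CD.inner a.1 a.1 + CD.inner a.2 a.2) • CD.e0 m)) : CD m × CD m)
    rw [CD.conj_neg, hc1, hc2, CD.pair_eq]
    constructor
    · rw [CD.mul_neg'' a.1 a.2, CD.neg_mul'' a.1 a.2, sub_neg_eq_add, neg_add_cancel]
    · rw [neg_neg, hsq1, hsq2, ← neg_add, ← add_smul]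
  · rw [CD.mul_def, hti, hte, hnorm, hinner]
    have hrhs : ((CD.inner a.1 a.1 + CD.inner a.2 a.2) • (((0:CD m), CD.e0 m) : CD m × CD m))
        = (((0 : CD m), (CD.inner a.1 a.1 + CD.inner a.2 a.2) • CD.e0 m) : CD m × CD m) := by
      show ((CD.inner a.1 a.1 + CD.inner a.2 a.2) • (0:CD m), _) = _
      rw [smul_zero]
    refine Eq.trans ?_ hrhs.symm
    show ((-a.2) * a.1 - CD.conj a.2 * a.1, a.2 * (-a.2) + a.1 * CD.conj a.1)
        = (((0 : CD m), (CD.inner a.1 a.1 + CD.inner a.2 a.2) • CD.e0 m) : CD m × CD m)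
    rw [hc1, hc2, CD.pair_eq]
    constructor
    · rw [CD.neg_mul'' a.2 a.1, sub_neg_eq_add, neg_add_cancel]
    · rw [CD.mul_neg'' a.2 a.2, CD.mul_neg'' a.1 a.1, hsq1, hsq2, neg_neg, neg_neg,
        add_smul, add_comm]
  · rw [hti]
    show CD.inner a.1 (-a.2) + CD.inner a.2 a.1 = 0
    rw [CD.inner_neg_right, CD.inner_symm a.2, neg_add_cancel]
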